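/- For every u with 1 ≤ u ≤ r there exist d with u ≤ d ≤ r and λ > 0 such that R_E(d, λ) < R_N(u, d). -/

import Mathlib

open Matrix
open scoped Kronecker

/-- The vectorization `vec(β)` of a `p × q` matrix, indexed to match `I_q ⊗ A`
(the index `(k, i)` with `k ∈ Fin q`, `i ∈ Fin p` corresponds to entry `β i k`). -/
def vecM {p q : ℕ} (β : Matrix (Fin p) (Fin q) ℝ) : Fin q × Fin p → ℝ :=
  fun ki => β ki.2 ki.1

/-- EgReg reducible prediction risk
`R_E(d, λ) = tr(Σ_ε)·tr(V_d D_d⁻² Φ_d² (Φ_d + λ I_d)⁻² V_d' Σ_x)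
  + λ²·vec(β*)'(I_q ⊗ V_d (Φ_d + λ I_d)⁻¹ V_d' Σ_x V_d (Φ_d + λ I_d)⁻¹ V_d') vec(β*)`. -/
noncomputable def RE {p q d : ℕ}
    (Vd : Matrix (Fin p) (Fin d) ℝ) (Dd Φd : Matrix (Fin d) (Fin d) ℝ)
    (Sx : Matrix (Fin p) (Fin p) ℝ) (Se : Matrix (Fin q) (Fin q) ℝ)
    (β : Matrix (Fin p) (Fin q) ℝ) (lam : ℝ) : ℝ :=
  Se.trace * (Vd * (Dd ^ 2)⁻¹ * Φd ^ 2 * ((Φd + lam • 1) ^ 2)⁻¹ * Vdᵀ * Sx).trace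
  + lam ^ 2 * vecM β ⬝ᵥ (((1 : Matrix (Fin q) (Fin q) ℝ) ⊗ₖ
      (Vd * (Φd + lam • 1)⁻¹ * Vdᵀ * Sx * Vd * (Φd + lam • 1)⁻¹ * Vdᵀ)).mulVec (vecM β))

/-- NIECE reducible prediction risk
`R_N(u, d) = tr(Σ_ε)·tr(V_u D_u⁻² V_u' Σ_x)
  + vec(β*)'(I_q ⊗ (V_u V_u' − V_d V_d') Σ_x (V_u V_u' − V_d V_d')) vec(β*)`. -/
noncomputable def RN {p q u d : ℕ}
    (Vu : Matrix (Fin p) (Fin u) ℝ) (Du : Matrix (Fin u) (Fin u) ℝ)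
    (Vd : Matrix (Fin p) (Fin d) ℝ)
    (Sx : Matrix (Fin p) (Fin p) ℝ) (Se : Matrix (Fin q) (Fin q) ℝ)
    (β : Matrix (Fin p) (Fin q) ℝ) : ℝ :=
  Se.trace * (Vu * (Du ^ 2)⁻¹ * Vuᵀ * Sx).trace
  + vecM β ⬝ᵥ (((1 : Matrix (Fin q) (Fin q) ℝ) ⊗ₖ
      ((Vu * Vuᵀ - Vd * Vdᵀ) * Sx * (Vu * Vuᵀ - Vd * Vdᵀ))).mulVec (vecM β))

/-- The largest eigenvalue of a square matrix. -/
noncomputable def maxEig {m : ℕ} (A : Matrix (Fin m) (Fin m) ℝ) : ℝ :=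
  sSup {t : ℝ | ∃ w : Fin m → ℝ, w ≠ 0 ∧ A.mulVec w = t • w}

lemma diag_inv' {u : ℕ} (w : Fin u → ℝ) (hw : ∀ i, w i ≠ 0) :
    (Matrix.diagonal w)⁻¹ = Matrix.diagonal (fun i => (w i)⁻¹) :=
  Matrix.inv_eq_right_inv (by
    rw [Matrix.diagonal_mul_diagonal]
    convert Matrix.diagonal_one with i
    exact mul_inv_cancel₀ (hw i))

lemma trace_mul_diag_conj {p u : ℕ} (W : Matrix (Fin p) (Fin u) ℝ)
    (a : Fin u → ℝ) (S : Matrix (Fin p) (Fin p) ℝ) :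
    (W * Matrix.diagonal a * Wᵀ * S).trace = ∑ i, a i * (Wᵀ * S * W) i i := by
  rw [Matrix.trace_mul_cycle, Matrix.trace_mul_cycle,
    ← Matrix.mul_assoc (Wᵀ * S) W, Matrix.trace_mul_comm]
  simp [Matrix.trace, Matrix.diag, Matrix.diagonal_mul]


lemma regroup6 {p u : ℕ} (W : Matrix (Fin p) (Fin u) ℝ) (G : Matrix (Fin u) (Fin u) ℝ)
    (S : Matrix (Fin p) (Fin p) ℝ) :
    W * G * Wᵀ * S * W * G * Wᵀ = (W * G) * (Wᵀ * S * W) * (G * Wᵀ) := by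
  simp only [Matrix.mul_assoc]

lemma quad_entry {p u : ℕ} (W : Matrix (Fin p) (Fin u) ℝ) (g : Fin u → ℝ)
    (N : Matrix (Fin u) (Fin u) ℝ) (i j : Fin p) :
    ((W * Matrix.diagonal g) * N * (Matrix.diagonal g * Wᵀ)) i j
      = ∑ b, (∑ a, W i a * g a * N a b) * (g b * W j b) := by
  rw [Matrix.mul_apply]
  refine Finset.sum_congr rfl fun b _ => ?_
  rw [Matrix.mul_apply, Matrix.diagonal_mul, Matrix.transpose_apply]
  congr 1
  refine Finset.sum_congr rfl fun a _ => ?_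
  rw [Matrix.mul_diagonal]

lemma trace_mul_diag3_conj {p u : ℕ} (W : Matrix (Fin p) (Fin u) ℝ)
    (a b c : Fin u → ℝ) (S : Matrix (Fin p) (Fin p) ℝ) :
    (W * Matrix.diagonal a * Matrix.diagonal b * Matrix.diagonal c * Wᵀ * S).trace
      = ∑ i, (a i * (b i * c i)) * (Wᵀ * S * W) i i := by
  rw [Matrix.mul_assoc (W * Matrix.diagonal a), Matrix.diagonal_mul_diagonal,
    Matrix.mul_assoc W, Matrix.diagonal_mul_diagonal, trace_mul_diag_conj]

set_option maxHeartbeats 2000000 in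
theorem egreg_beats_niece_reducible_risk
    (n p q r : ℕ) (hr : 0 < r)
    (X : Matrix (Fin n) (Fin p) ℝ)
    (U : Matrix (Fin n) (Fin r) ℝ) (V : Matrix (Fin p) (Fin r) ℝ) (σ : Fin r → ℝ)
    (hrank : X.rank = r)
    (hSVD : X = U * Matrix.diagonal σ * Vᵀ)
    (hU : Uᵀ * U = 1) (hV : Vᵀ * V = 1)
    (hσpos : ∀ j, 0 < σ j) (hσanti : Antitone σ)
    (π : Equiv.Perm (Fin r)) (φ : Fin r → ℝ)
    (hφpos : ∀ j, 0 < φ j) (hφanti : Antitone φ)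
    (Sx : Matrix (Fin p) (Fin p) ℝ) (hSx : Sx.PosDef) (hSxsymm : Sx.IsSymm)
    (Se : Matrix (Fin q) (Fin q) ℝ) (hSe : Se.PosSemidef) (hSetr : 0 < Se.trace)
    (β : Matrix (Fin p) (Fin q) ℝ) :
    ∀ u : ℕ, 1 ≤ u → ∀ hu : u ≤ r,
      ∃ (d : ℕ) (_ : u ≤ d) (hdr : d ≤ r) (lam : ℝ), 0 < lam ∧
        RE (V.submatrix id (fun j : Fin d => π (Fin.castLE hdr j)))
           (Matrix.diagonal (fun j : Fin d => σ (π (Fin.castLE hdr j))))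
           (Matrix.diagonal (fun j : Fin d => φ (Fin.castLE hdr j)))
           Sx Se β lam
        < RN (V.submatrix id (fun j : Fin u => π (Fin.castLE hu j)))
             (Matrix.diagonal (fun j : Fin u => σ (π (Fin.castLE hu j))))
             (V.submatrix id (fun j : Fin d => π (Fin.castLE hdr j)))
             Sx Se β := by
  intro u h1u hu
  refine ⟨u, le_refl u, hu, ?_⟩
  set W : Matrix (Fin p) (Fin u) ℝ :=
    V.submatrix id (fun j : Fin u => π (Fin.castLE hu j)) with hWdef
  set σ' : Fin u → ℝ := fun j => σ (π (Fin.castLE hu j)) with hσ'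
  set φ' : Fin u → ℝ := fun j => φ (Fin.castLE hu j) with hφ'
  set N : Matrix (Fin u) (Fin u) ℝ := Wᵀ * Sx * W with hNdef
  have hσ'pos : ∀ i, 0 < σ' i := fun i => hσpos _
  have hφ'pos : ∀ i, 0 < φ' i := fun i => hφpos _
  -- orthonormal columns
  have hVap : ∀ a b, (Vᵀ * V) a b = (1 : Matrix (Fin r) (Fin r) ℝ) a b := fun a b => by
    rw [hV]
  have hWW : Wᵀ * W = (1 : Matrix (Fin u) (Fin u) ℝ) := by
    ext i j
    have h2 : (Wᵀ * W) i j = (Vᵀ * V) (π (Fin.castLE hu i)) (π (Fin.castLE hu j)) := by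
      simp [Matrix.mul_apply, hWdef]
    rw [h2, hVap]
    by_cases hij : i = j
    · simp [hij, Matrix.one_apply]
    · have : π (Fin.castLE hu i) ≠ π (Fin.castLE hu j) := by
        intro h
        exact hij (Fin.castLE_injective hu (π.injective h))
      simp [Matrix.one_apply, hij, this]
  -- positivity of diagonal of N
  have hNpos : ∀ i, 0 < N i i := by
    intro i
    have hcol : (fun k => W k i) ≠ 0 := by
      intro h0
      have h1 : (Wᵀ * W) i i = 0 := by
        simp only [Matrix.mul_apply, Matrix.transpose_apply]
        refine Finset.sum_eq_zero fun k _ => ?_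
        have : W k i = 0 := congrFun h0 k
        simp [this]
      rw [hWW] at h1
      simp [Matrix.one_apply] at h1
    have hq := hSx.dotProduct_mulVec_pos hcol
    have hNq : N i i = star (fun k => W k i) ⬝ᵥ Sx.mulVec (fun k => W k i) := by
      simp only [hNdef, Matrix.mul_apply, Matrix.transpose_apply, dotProduct,
        Matrix.mulVec, star_trivial, Finset.sum_mul, Finset.mul_sum]
      rw [Finset.sum_comm]
      exact Finset.sum_congr rfl fun k _ => Finset.sum_congr rfl fun l _ => by ring
    rw [hNq]; exact hq
  clear_value W σ' φ' N
  -- diagonal inverse computations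
  have hD2 : (Matrix.diagonal σ' ^ 2)⁻¹ = Matrix.diagonal (fun i => ((σ' i) ^ 2)⁻¹) := by
    rw [Matrix.diagonal_pow, diag_inv' (σ' ^ 2) (fun i => pow_ne_zero 2 (ne_of_gt (hσ'pos i)))]
    rfl
  have hΦ2 : (Matrix.diagonal φ') ^ 2 = Matrix.diagonal (fun i => (φ' i) ^ 2) := by
    rw [Matrix.diagonal_pow]; rfl
  -- constants
  set C : Fin p → Fin p → ℝ := fun i j =>
    ∑ b, (∑ a, |W i a| * (φ' a)⁻¹ * |N a b|) * ((φ' b)⁻¹ * |W j b|) with hCdef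
  have hC0 : ∀ i j, 0 ≤ C i j := by
    intro i j
    refine Finset.sum_nonneg fun b _ => mul_nonneg (Finset.sum_nonneg fun a _ => ?_)
      (mul_nonneg (inv_nonneg.2 (hφ'pos b).le) (abs_nonneg _))
    exact mul_nonneg (mul_nonneg (abs_nonneg _) (inv_nonneg.2 (hφ'pos a).le)) (abs_nonneg _)
  set B : ℝ := ∑ ki : Fin q × Fin p, ∑ lj : Fin q × Fin p,
    |vecM β ki| * (C ki.2 lj.2 * |vecM β lj|) with hBdef
  have hB0 : 0 ≤ B := by
    refine Finset.sum_nonneg fun ki _ => Finset.sum_nonneg fun lj _ => ?_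
    exact mul_nonneg (abs_nonneg _) (mul_nonneg (hC0 _ _) (abs_nonneg _))
  set K : ℝ := Se.trace * ∑ i, ((σ' i) ^ 2)⁻¹ * N i i * (2 * φ' i / (φ' i + 1) ^ 2) with hKdef
  have hK : 0 < K := by
    refine mul_pos hSetr (Finset.sum_pos (fun i _ => ?_) ?_)
    · have h1 : 0 < ((σ' i) ^ 2)⁻¹ := inv_pos.2 (pow_pos (hσ'pos i) 2)
      have h2 : 0 < 2 * φ' i / (φ' i + 1) ^ 2 :=
        div_pos (by linarith [hφ'pos i]) (pow_pos (by linarith [hφ'pos i]) 2)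
      exact mul_pos (mul_pos h1 (hNpos i)) h2
    · have : Nonempty (Fin u) := ⟨⟨0, h1u⟩⟩
      exact Finset.univ_nonempty
  -- choose lambda
  set lam : ℝ := min 1 (K / (2 * (B + 1))) with hlamdef
  have hlam0 : 0 < lam := lt_min one_pos (div_pos hK (by linarith))
  have hlam1 : lam ≤ 1 := min_le_left _ _
  have hlamB : lam * B < K := by
    have h2 : lam ≤ K / (2 * (B + 1)) := min_le_right _ _
    rw [le_div_iff₀ (by linarith)] at h2
    nlinarith
  clear_value C B K
  clear_value lam
  refine ⟨lam, hlam0, ?_⟩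
  -- diagonal facts involving lam
  have hΦl : Matrix.diagonal φ' + lam • 1 = Matrix.diagonal (fun i => φ' i + lam) := by
    rw [Matrix.smul_one_eq_diagonal, Matrix.diagonal_add]
  have hΦlinv : (Matrix.diagonal φ' + lam • 1)⁻¹
      = Matrix.diagonal (fun i => (φ' i + lam)⁻¹) := by
    rw [hΦl, diag_inv' _ (fun i => ne_of_gt (by linarith [hφ'pos i]))]
  have hΦl2inv : ((Matrix.diagonal φ' + lam • 1) ^ 2)⁻¹
      = Matrix.diagonal (fun i => ((φ' i + lam) ^ 2)⁻¹) := by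
    rw [hΦl, Matrix.diagonal_pow,
      diag_inv' ((fun i => φ' i + lam) ^ 2) (fun i => pow_ne_zero 2
        (ne_of_gt (show (0:ℝ) < φ' i + lam by linarith [hφ'pos i])))]
    rfl
  set g : Fin u → ℝ := fun i => (φ' i + lam)⁻¹ with hgdef
  have hgpos : ∀ i, 0 < g i := fun i => inv_pos.2 (by linarith [hφ'pos i])
  have hgle : ∀ i, g i ≤ (φ' i)⁻¹ := fun i =>
    inv_anti₀ (hφ'pos i) (by linarith)
  -- trace identities
  have hTN : (W * (Matrix.diagonal σ' ^ 2)⁻¹ * Wᵀ * Sx).trace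
      = ∑ i, ((σ' i) ^ 2)⁻¹ * N i i := by
    rw [hD2, trace_mul_diag_conj, ← hNdef]
  have hTE : (W * (Matrix.diagonal σ' ^ 2)⁻¹ * Matrix.diagonal φ' ^ 2
        * ((Matrix.diagonal φ' + lam • 1) ^ 2)⁻¹ * Wᵀ * Sx).trace
      = ∑ i, (((σ' i) ^ 2)⁻¹ * ((φ' i) ^ 2 * ((φ' i + lam) ^ 2)⁻¹)) * N i i := by
    rw [hD2, hΦ2, hΦl2inv, trace_mul_diag3_conj, ← hNdef]
  -- second term of RN is zero
  have hRN2 : vecM β ⬝ᵥ (((1 : Matrix (Fin q) (Fin q) ℝ) ⊗ₖ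
      ((W * Wᵀ - W * Wᵀ) * Sx * (W * Wᵀ - W * Wᵀ))).mulVec (vecM β)) = 0 := by
    simp
  -- bound the quadratic term of RE
  set Mg : Matrix (Fin p) (Fin p) ℝ := (W * Matrix.diagonal g) * N * (Matrix.diagonal g * Wᵀ)
    with hMgdef
  have hMmat : W * (Matrix.diagonal φ' + lam • 1)⁻¹ * Wᵀ * Sx * W
      * (Matrix.diagonal φ' + lam • 1)⁻¹ * Wᵀ = Mg := by
    rw [hΦlinv, hMgdef, hNdef, regroup6]
  have hMb : ∀ i j, |Mg i j| ≤ C i j := by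
    intro i j
    rw [hMgdef, quad_entry]
    simp only [hCdef]
    refine le_trans (Finset.abs_sum_le_sum_abs _ _) (Finset.sum_le_sum fun b _ => ?_)
    rw [abs_mul]
    have houter : |g b * W j b| ≤ (φ' b)⁻¹ * |W j b| := by
      rw [abs_mul, abs_of_pos (hgpos b)]
      exact mul_le_mul_of_nonneg_right (hgle b) (abs_nonneg _)
    have hinner : |∑ a, W i a * g a * N a b| ≤ ∑ a, |W i a| * (φ' a)⁻¹ * |N a b| := by
      refine le_trans (Finset.abs_sum_le_sum_abs _ _) (Finset.sum_le_sum fun a _ => ?_)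
      rw [abs_mul, abs_mul, abs_of_pos (hgpos a)]
      exact mul_le_mul_of_nonneg_right
        (mul_le_mul_of_nonneg_left (hgle a) (abs_nonneg _)) (abs_nonneg _)
    refine mul_le_mul hinner houter (abs_nonneg _) ?_
    exact Finset.sum_nonneg fun a _ =>
      mul_nonneg (mul_nonneg (abs_nonneg _) (inv_nonneg.2 (hφ'pos a).le)) (abs_nonneg _)
  clear_value g
  set Qv : ℝ := vecM β ⬝ᵥ (((1 : Matrix (Fin q) (Fin q) ℝ) ⊗ₖ Mg).mulVec (vecM β)) with hQvdef
  have hQB : |Qv| ≤ B := by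
    have hQexp : Qv = ∑ ki, ∑ lj, vecM β ki
        * (((1 : Matrix (Fin q) (Fin q) ℝ) ⊗ₖ Mg) ki lj * vecM β lj) := by
      simp [hQvdef, dotProduct, Matrix.mulVec, Finset.mul_sum]
    rw [hQexp, hBdef]
    refine le_trans (Finset.abs_sum_le_sum_abs _ _) (Finset.sum_le_sum fun ki _ => ?_)
    refine le_trans (Finset.abs_sum_le_sum_abs _ _) (Finset.sum_le_sum fun lj _ => ?_)
    rw [abs_mul, abs_mul]
    refine mul_le_mul_of_nonneg_left (mul_le_mul_of_nonneg_right ?_ (abs_nonneg _))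
      (abs_nonneg _)
    have hone : |(1 : Matrix (Fin q) (Fin q) ℝ) ki.1 lj.1| ≤ 1 := by
      rw [Matrix.one_apply]
      split_ifs <;> simp
    calc |((1 : Matrix (Fin q) (Fin q) ℝ) ⊗ₖ Mg) ki lj|
        = |(1 : Matrix (Fin q) (Fin q) ℝ) ki.1 lj.1| * |Mg ki.2 lj.2| := by
          rw [Matrix.kroneckerMap_apply, abs_mul]
      _ ≤ 1 * C ki.2 lj.2 := mul_le_mul hone (hMb _ _) (abs_nonneg _) zero_le_one
      _ = C ki.2 lj.2 := one_mul _
  -- per-index scalar inequality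
  have hscal : ∀ i : Fin u,
      ((σ' i) ^ 2)⁻¹ * N i i - (((σ' i) ^ 2)⁻¹ * ((φ' i) ^ 2 * ((φ' i + lam) ^ 2)⁻¹)) * N i i
        ≥ lam * (((σ' i) ^ 2)⁻¹ * N i i * (2 * φ' i / (φ' i + 1) ^ 2)) := by
    intro i
    have hφp := hφ'pos i
    have hfrac : lam * (2 * φ' i / (φ' i + 1) ^ 2) + (φ' i) ^ 2 * ((φ' i + lam) ^ 2)⁻¹ ≤ 1 := by
      have hd1 : (0:ℝ) < (φ' i + lam) ^ 2 := pow_pos (by linarith) 2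
      have hd2 : (0:ℝ) < (φ' i + 1) ^ 2 := pow_pos (by linarith) 2
      have he : (φ' i) ^ 2 * ((φ' i + lam) ^ 2)⁻¹
          = 1 - lam * (2 * φ' i + lam) / (φ' i + lam) ^ 2 := by
        field_simp
        ring
      have hle : lam * (2 * φ' i) / (φ' i + 1) ^ 2
          ≤ lam * (2 * φ' i + lam) / (φ' i + lam) ^ 2 := by
        refine div_le_div₀ (by nlinarith) (by nlinarith) hd1 ?_
        nlinarith
      rw [he]
      have : lam * (2 * φ' i / (φ' i + 1) ^ 2) = lam * (2 * φ' i) / (φ' i + 1) ^ 2 := by ring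
      linarith [this ▸ hle]
    have ht : 0 < ((σ' i) ^ 2)⁻¹ * N i i :=
      mul_pos (inv_pos.2 (pow_pos (hσ'pos i) 2)) (hNpos i)
    nlinarith [mul_le_mul_of_nonneg_left hfrac ht.le]
  -- assemble
  unfold RE RN
  rw [hTE, hTN, hMmat, hRN2, ← hQvdef]
  have hsum : Se.trace * (∑ i, ((σ' i) ^ 2)⁻¹ * N i i)
      - Se.trace * (∑ i, (((σ' i) ^ 2)⁻¹ * ((φ' i) ^ 2 * ((φ' i + lam) ^ 2)⁻¹)) * N i i)
      ≥ lam * K := by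
    have h1 : (∑ i, ((σ' i) ^ 2)⁻¹ * N i i)
        - (∑ i, (((σ' i) ^ 2)⁻¹ * ((φ' i) ^ 2 * ((φ' i + lam) ^ 2)⁻¹)) * N i i)
        ≥ lam * ∑ i, ((σ' i) ^ 2)⁻¹ * N i i * (2 * φ' i / (φ' i + 1) ^ 2) := by
      rw [← Finset.sum_sub_distrib, Finset.mul_sum]
      exact Finset.sum_le_sum fun i _ => hscal i
    have h2 := mul_le_mul_of_nonneg_left h1 hSetr.le
    rw [hKdef]
    nlinarith
  have hq2 : lam ^ 2 * Qv < lam * K := by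
    have h1 : lam ^ 2 * Qv ≤ lam ^ 2 * B :=
      mul_le_mul_of_nonneg_left (le_trans (le_abs_self _) hQB) (sq_nonneg lam)
    have h2 : lam * (lam * B) < lam * K := mul_lt_mul_of_pos_left hlamB hlam0
    nlinarith
  linarith
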